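/- On $\mathbb{C}^2 \setminus \{0\}$ with $\rho = |z_1|^2 + |z_2|^2$, for $a > 0$ let $f_a(\rho) = \rho\sqrt{1 + a^2/\rho^2} + a \log\big(\rho / (a + \sqrt{a^2 + \rho^2})\big)$. Then the Kähler form $\omega_a = \sqrt{-1}\,\partial\bar\partial f_a$ is a Ricci-flat Kähler metric on $\mathbb{C}^2 \setminus \{0\}$, i.e., its Ricci form vanishes identically; equivalently $\det(\partial_i \partial_{\bar j} f_a) $ is a positive constant. -/

import Mathlib

noncomputable def fEH (a ρ : ℝ) : ℝ :=
  ρ * Real.sqrt (1 + a ^ 2 / ρ ^ 2) +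
    a * Real.log (ρ / (a + Real.sqrt (a ^ 2 + ρ ^ 2)))

lemma sqrt_deriv (a ρ : ℝ) (hρ : 0 < ρ) :
    HasDerivAt (fun x => Real.sqrt (a ^ 2 + x ^ 2)) (ρ / Real.sqrt (a ^ 2 + ρ ^ 2)) ρ := by
  have h : (0:ℝ) < a ^ 2 + ρ ^ 2 := by positivity
  have h1 : HasDerivAt (fun x : ℝ => a ^ 2 + x ^ 2) (2 * ρ) ρ := by
    simpa using (hasDerivAt_pow 2 ρ).const_add (a ^ 2)
  have h2 := (Real.hasDerivAt_sqrt h.ne').comp ρ h1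
  have hs : Real.sqrt (a ^ 2 + ρ ^ 2) ≠ 0 := by positivity
  refine h2.congr_deriv ?_
  field_simp

lemma fEH_eq (a : ℝ) (ha : 0 < a) {ρ : ℝ} (hρ : 0 < ρ) :
    fEH a ρ = Real.sqrt (a ^ 2 + ρ ^ 2) +
      (a * Real.log ρ - a * Real.log (a + Real.sqrt (a ^ 2 + ρ ^ 2))) := by
  have hs : 0 < Real.sqrt (a ^ 2 + ρ ^ 2) := Real.sqrt_pos.mpr (by positivity)
  have h1 : Real.sqrt (a ^ 2 + ρ ^ 2) = ρ * Real.sqrt (1 + a ^ 2 / ρ ^ 2) := by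
    rw [show a ^ 2 + ρ ^ 2 = ρ ^ 2 * (1 + a ^ 2 / ρ ^ 2) by field_simp; ring,
        Real.sqrt_mul (by positivity), Real.sqrt_sq hρ.le]
  rw [fEH, h1, Real.log_div hρ.ne' (by positivity), mul_sub]

lemma hasDerivAt_fEH (a : ℝ) (ha : 0 < a) {ρ : ℝ} (hρ : 0 < ρ) :
    HasDerivAt (fEH a) (Real.sqrt (a ^ 2 + ρ ^ 2) / ρ) ρ := by
  set s := Real.sqrt (a ^ 2 + ρ ^ 2) with hsdef
  have hs : 0 < s := Real.sqrt_pos.mpr (by positivity)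
  have hsq : s ^ 2 = a ^ 2 + ρ ^ 2 := Real.sq_sqrt (by positivity)
  have has : 0 < a + s := by positivity
  have hd1 := sqrt_deriv a ρ hρ
  have hd2 : HasDerivAt (fun x : ℝ => a * Real.log x) (a * (1 / ρ)) ρ := by
    simpa using (Real.hasDerivAt_log hρ.ne').const_mul a
  have hd3 : HasDerivAt (fun x : ℝ => a * Real.log (a + Real.sqrt (a ^ 2 + x ^ 2)))
      (a * ((ρ / s) / (a + s))) ρ := by
    have hin : HasDerivAt (fun x : ℝ => a + Real.sqrt (a ^ 2 + x ^ 2)) (ρ / s) ρ :=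
      (sqrt_deriv a ρ hρ).const_add a
    have := (Real.hasDerivAt_log has.ne').comp ρ hin
    simpa [div_eq_inv_mul, mul_comm, mul_assoc] using this.const_mul a
  have hG : HasDerivAt (fun x => Real.sqrt (a ^ 2 + x ^ 2) +
      (a * Real.log x - a * Real.log (a + Real.sqrt (a ^ 2 + x ^ 2))))
      (ρ / s + (a * (1 / ρ) - a * ((ρ / s) / (a + s)))) ρ := hd1.add (hd2.sub hd3)
  have hev : fEH a =ᶠ[nhds ρ] fun x => Real.sqrt (a ^ 2 + x ^ 2) +
      (a * Real.log x - a * Real.log (a + Real.sqrt (a ^ 2 + x ^ 2))) := by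
    filter_upwards [eventually_gt_nhds hρ] with x hx
    exact fEH_eq a ha hx
  have heq : ρ / s + (a * (1 / ρ) - a * ((ρ / s) / (a + s))) = s / ρ := by
    field_simp
    linear_combination (-s) * hsq
  rw [← heq]
  exact hG.congr_of_eventuallyEq hev

lemma hasDerivAt_deriv_fEH (a : ℝ) (ha : 0 < a) {ρ : ℝ} (hρ : 0 < ρ) :
    deriv (deriv (fEH a)) ρ = (ρ / Real.sqrt (a ^ 2 + ρ ^ 2) * ρ -
      Real.sqrt (a ^ 2 + ρ ^ 2) * 1) / ρ ^ 2 := by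
  have hev : deriv (fEH a) =ᶠ[nhds ρ] fun x => Real.sqrt (a ^ 2 + x ^ 2) / x := by
    filter_upwards [eventually_gt_nhds hρ] with x hx
    exact (hasDerivAt_fEH a ha hx).deriv
  rw [hev.deriv_eq]
  exact ((sqrt_deriv a ρ hρ).div (hasDerivAt_id ρ) hρ.ne').deriv

/-- for `a > 0`, the form `ω_a = √-1 ∂∂̄ f_a(ρ)` is a Ricci-flat Kähler
metric on `ℂ² \ {0}`.  For a rotation-invariant potential `f(ρ)` on `ℂ²` the complex
Hessian `(∂_i ∂_{j̄} f)` has eigenvalues `f'` and `f' + ρ f''`, so being a Kähler metric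
means `f' > 0` and `f' + ρ f'' > 0`, and Ricci-flatness is equivalent to
`det(∂_i ∂_{j̄} f) = f'(ρ) · (f'(ρ) + ρ f''(ρ))` being a positive constant. -/
theorem eguchiHanson_ricci_flat (a : ℝ) (ha : 0 < a) :
    (∀ ρ : ℝ, 0 < ρ →
        0 < deriv (fEH a) ρ ∧ 0 < deriv (fEH a) ρ + ρ * deriv (deriv (fEH a)) ρ) ∧
    ∃ c : ℝ, 0 < c ∧ ∀ ρ : ℝ, 0 < ρ →
        deriv (fEH a) ρ * (deriv (fEH a) ρ + ρ * deriv (deriv (fEH a)) ρ) = c := by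
  have key : ∀ ρ : ℝ, 0 < ρ →
      deriv (fEH a) ρ = Real.sqrt (a ^ 2 + ρ ^ 2) / ρ ∧
      deriv (fEH a) ρ + ρ * deriv (deriv (fEH a)) ρ = ρ / Real.sqrt (a ^ 2 + ρ ^ 2) := by
    intro ρ hρ
    have hs : 0 < Real.sqrt (a ^ 2 + ρ ^ 2) := Real.sqrt_pos.mpr (by positivity)
    have hsq : Real.sqrt (a ^ 2 + ρ ^ 2) ^ 2 = a ^ 2 + ρ ^ 2 := Real.sq_sqrt (by positivity)
    have h1 : deriv (fEH a) ρ = Real.sqrt (a ^ 2 + ρ ^ 2) / ρ := (hasDerivAt_fEH a ha hρ).deriv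
    refine ⟨h1, ?_⟩
    rw [h1, hasDerivAt_deriv_fEH a ha hρ]
    field_simp
    linear_combination (0:ℝ) * hsq
  refine ⟨fun ρ hρ => ?_, 1, one_pos, fun ρ hρ => ?_⟩
  · obtain ⟨h1, h2⟩ := key ρ hρ
    have hs : 0 < Real.sqrt (a ^ 2 + ρ ^ 2) := Real.sqrt_pos.mpr (by positivity)
    constructor
    · rw [h1]; positivity
    · rw [h2]; positivity
  · obtain ⟨h1, h2⟩ := key ρ hρ
    have hs : 0 < Real.sqrt (a ^ 2 + ρ ^ 2) := Real.sqrt_pos.mpr (by positivity)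
    rw [h2, h1]
    field_simp
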